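/- Let X be a vector space with a norm, α ∈ ℝ \ {1}, and let A ⊆ X × X be an operator that is homogeneous of order α. Then for every f ∈ X, λ, μ > 0 and u, v ∈ X, the following two inclusions are equivalent: (i) λ^{1/(α−1)} v ∈ u + μ(Au − f·λ^{α/(α−1)}), i.e. there exists w ∈ A u with λ^{1/(α−1)} v = u + μ(w − λ^{α/(α−1)} f); (ii) v ∈ λ^{1/(1−α)} u + λμ (A(λ^{1/(1−α)} u) − f), i.e. there exists w' ∈ A(λ^{1/(1−α)} u) with v = λ^{1/(1−α)} u + λμ(w' − f). Equivalently, in terms of resolvents, λ^{1/(α−1)} J^{A−f}_{λμ} v = J^{A − λ^{α/(α−1)} f}_{μ}[λ^{1/(α−1)} v] whenever these resolvents are defined, where J^{B}_{μ} = (I + μB)^{−1}. -/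

import Mathlib

open MeasureTheory Filter Real Set Topology Pointwise

noncomputable section

variable {X : Type*} [NormedAddCommGroup X] [NormedSpace ℝ X]

/-- The domain of a possibly multivalued operator `A ⊆ X × X`. -/
def opDomain (A : Set (X × X)) : Set X := {u | ∃ v, (u, v) ∈ A}

/-- An operator `A ⊆ X × X` is accretive. -/
def IsAccretive (A : Set (X × X)) : Prop :=
  ∀ p ∈ A, ∀ q ∈ A, ∀ lam : ℝ, 0 ≤ lam →
    ‖p.1 - q.1‖ ≤ ‖p.1 - q.1 + lam • (p.2 - q.2)‖

/-- An operator `A` is m-accretive: accretive plus the range condition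
`Rg(I + λ A) = X` for all `λ > 0`. -/
def IsMAccretive (A : Set (X × X)) : Prop :=
  IsAccretive A ∧ ∀ lam : ℝ, 0 < lam → ∀ z : X, ∃ p ∈ A, p.1 + lam • p.2 = z

/-- The shifted operator `A + ω I`. -/
def opShift (A : Set (X × X)) (ω : ℝ) : Set (X × X) :=
  {p | ∃ q ∈ A, p = (q.1, q.2 + ω • q.1)}

/-- `A` is ω-quasi m-accretive: `A + ω I` is accretive and `Rg(I + λ A) = X`
for all `λ > 0` with `λ ω < 1`. -/
def IsQuasiMAccretive (A : Set (X × X)) (ω : ℝ) : Prop :=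
  IsAccretive (opShift A ω) ∧
    ∀ lam : ℝ, 0 < lam → lam * ω < 1 → ∀ z : X, ∃ p ∈ A, p.1 + lam • p.2 = z

/-- `A` is homogeneous of order `α`: `(0,0) ∈ A` and for `u ∈ D(A)`, `λ ≥ 0` one has
`λ u ∈ D(A)` and `A(λ u) = λ^α A u`. -/
def IsHomogeneousOp (A : Set (X × X)) (α : ℝ) : Prop :=
  ((0 : X), (0 : X)) ∈ A ∧
    ∀ u ∈ opDomain A, ∀ lam : ℝ, 0 ≤ lam →
      lam • u ∈ opDomain A ∧
        {w : X | (lam • u, w) ∈ A} = (lam ^ α) • {v : X | (u, v) ∈ A}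

/-- The perturbed operator `A + F`. -/
def opPerturb (A : Set (X × X)) (F : X → X) : Set (X × X) :=
  {p | ∃ v, (p.1, v) ∈ A ∧ p.2 = v + F p.1}

/-- `u` is a mild solution on `[0,T]` of `du/dt + B(u(t)) ∋ f(t)`, `u(0) = u₀`,
in the sense of Bénilan–Crandall ε-discretizations. -/
def IsMildSolution (B : Set (X × X)) (T : ℝ) (f : ℝ → X) (u₀ : X) (u : ℝ → X) : Prop :=
  ContinuousOn u (Icc 0 T) ∧ u 0 = u₀ ∧
    ∀ ε > 0, ∃ (N : ℕ) (τ : ℕ → ℝ) (v : ℕ → X), 0 < N ∧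
      τ 0 = 0 ∧ τ N = T ∧ v 0 = u₀ ∧
      (∀ i < N, τ i < τ (i + 1) ∧ τ (i + 1) - τ i < ε) ∧
      (∑ i ∈ Finset.range N, ∫ s in τ i..τ (i + 1),
          ‖f s - (τ (i + 1) - τ i)⁻¹ • ∫ r in τ i..τ (i + 1), f r‖) < ε ∧
      (∀ i < N, ∃ w : X, (v (i + 1), w) ∈ B ∧
          (τ (i + 1) - τ i)⁻¹ • (v (i + 1) - v i) + w
            = (τ (i + 1) - τ i)⁻¹ • ∫ r in τ i..τ (i + 1), f r) ∧
      (∀ i < N, ∀ s ∈ Ioc (τ i) (τ (i + 1)), ‖u s - v (i + 1)‖ < ε)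

/-- **Resolvent identity (2.26)** for homogeneous operators: the two resolvent
inclusions are equivalent. -/
theorem statement13
    (α : ℝ) (hα : α ≠ 1) (A : Set (X × X)) (hAhom : IsHomogeneousOp A α)
    (f : X) (lam μ : ℝ) (hlam : 0 < lam) (hμ : 0 < μ) (u v : X) :
    (∃ w : X, (u, w) ∈ A ∧
        (lam ^ (1 / (α - 1))) • v = u + μ • (w - (lam ^ (α / (α - 1))) • f)) ↔
    (∃ w' : X, ((lam ^ (1 / (1 - α))) • u, w') ∈ A ∧
        v = (lam ^ (1 / (1 - α))) • u + (lam * μ) • (w' - f)) := by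
  have h1α : (1 : ℝ) - α ≠ 0 := sub_ne_zero.mpr (Ne.symm hα)
  set b : ℝ := lam ^ (1 / (1 - α)) with hb
  have hbpos : 0 < b := Real.rpow_pos_of_pos hlam _
  set a : ℝ := b ^ α with ha
  have hapos : 0 < a := Real.rpow_pos_of_pos hbpos _
  have hblam : b ^ (1 - α) = lam := by
    rw [hb, ← Real.rpow_mul hlam.le, one_div_mul_cancel h1α, Real.rpow_one]
  have hba : b = lam * a := by
    have : b = b ^ ((1 - α) + α) := by norm_num
    rw [this, Real.rpow_add hbpos, hblam, ha]
  have hinv : lam ^ (1 / (α - 1)) = b⁻¹ := by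
    rw [show (1 : ℝ) / (α - 1) = -(1 / (1 - α)) by
        rw [show α - 1 = -(1 - α) by ring, div_neg],
      Real.rpow_neg hlam.le, hb]
  have hafe : lam ^ (α / (α - 1)) = a⁻¹ := by
    have h1 : a = lam ^ (α / (1 - α)) := by
      rw [ha, hb, ← Real.rpow_mul hlam.le, one_div_mul_eq_div]
    rw [show α / (α - 1) = -(α / (1 - α)) by
        rw [show α - 1 = -(1 - α) by ring, div_neg],
      Real.rpow_neg hlam.le, h1]
  rw [hinv, hafe]
  constructor
  · rintro ⟨w, hwA, heq⟩
    obtain ⟨-, hset⟩ := hAhom.2 u ⟨w, hwA⟩ b hbpos.le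
    refine ⟨a • w, ?_, ?_⟩
    · have : a • w ∈ {w : X | (b • u, w) ∈ A} := by
        rw [hset, ← ha]; exact ⟨w, hwA, rfl⟩
      exact this
    · have hv : v = b • (u + μ • (w - a⁻¹ • f)) := by
        rw [← heq, smul_smul, mul_inv_cancel₀ hbpos.ne', one_smul]
      rw [hv, hba]
      match_scalars <;> field_simp <;> ring
  · rintro ⟨w', hw'A, heq⟩
    obtain ⟨-, hset⟩ := hAhom.2 (b • u) ⟨w', hw'A⟩ b⁻¹ (inv_nonneg.mpr hbpos.le)
    rw [inv_smul_smul₀ hbpos.ne', Real.inv_rpow hbpos.le, ← ha] at hset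
    refine ⟨a⁻¹ • w', ?_, ?_⟩
    · have : a⁻¹ • w' ∈ {w : X | (u, w) ∈ A} := by
        rw [hset]; exact ⟨w', hw'A, rfl⟩
      exact this
    · rw [heq, hba]
      match_scalars <;> field_simp <;> ring
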